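/- Let w_1, …, w_T be i.i.d. random vectors in ℝ^d, each distributed as a centered Gaussian with covariance σ²I, suppose T > 2, and let E be any event with probability P(E) ≤ δ for some δ ∈ (0,1]. Then E[1_E · max_{1 ≤ t ≤ T} ‖w_t‖²] ≤ 5σ²d δ log(3T/δ), where ‖·‖ is the Euclidean norm and 1_E is the indicator of E. -/

import Mathlib

open MeasureTheory ProbabilityTheory
open Real
open scoped NNReal ENNReal


lemma integrable_poly_gauss (n : ℕ) {b : ℝ} (hb : 0 < b) :
    Integrable fun x : ℝ => x ^ n * Real.exp (-b * x ^ 2) := by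
  have := integrable_rpow_mul_exp_neg_mul_sq hb (s := (n : ℝ)) (by exact lt_of_lt_of_le (by norm_num) (Nat.cast_nonneg n))
  simpa only [Real.rpow_natCast] using this

lemma hasDeriv_poly_gauss (b : ℝ) (m : ℕ) (x : ℝ) :
    HasDerivAt (fun x : ℝ => x ^ (m + 1) * Real.exp (-b * x ^ 2))
      (((m : ℝ) + 1) * x ^ m * Real.exp (-b * x ^ 2)
        - 2 * b * x ^ (m + 2) * Real.exp (-b * x ^ 2)) x := by
  have h2 : HasDerivAt (fun x : ℝ => Real.exp (-b * x ^ 2))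
      (Real.exp (-b * x ^ 2) * (-b * (2 * x ^ 1))) x :=
    (((hasDerivAt_pow 2 x).const_mul (-b)).exp)
  have h := (hasDerivAt_pow (m + 1) x).fun_mul h2
  refine h.congr_deriv ?_
  push_cast
  ring

lemma gauss_moment_rec {b : ℝ} (hb : 0 < b) (p : ℕ) :
    ∫ x : ℝ, x ^ (2 * (p + 1)) * Real.exp (-b * x ^ 2)
      = ((2 * p + 1) / (2 * b)) * ∫ x : ℝ, x ^ (2 * p) * Real.exp (-b * x ^ 2) := by
  have hzero : ∫ x : ℝ, (((2 * p : ℝ) + 1) * x ^ (2 * p) * Real.exp (-b * x ^ 2)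
      - 2 * b * x ^ (2 * p + 2) * Real.exp (-b * x ^ 2)) = 0 := by
    apply integral_eq_zero_of_hasDerivAt_of_integrable
      (f := fun x : ℝ => x ^ (2 * p + 1) * Real.exp (-b * x ^ 2))
    · intro x
      have := hasDeriv_poly_gauss b (2 * p) x
      refine this.congr_deriv ?_ <;> push_cast <;> ring_nf
    · have h1 := (integrable_poly_gauss (2 * p) hb).const_mul ((2 * p : ℝ) + 1)
      have h2 := (integrable_poly_gauss (2 * p + 2) hb).const_mul (2 * b)
      simpa [mul_assoc, Pi.sub_def] using h1.sub h2
    · exact integrable_poly_gauss (2 * p + 1) hb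
  have h1 := (integrable_poly_gauss (2 * p) hb).const_mul ((2 * p : ℝ) + 1)
  have h2 := (integrable_poly_gauss (2 * p + 2) hb).const_mul (2 * b)
  rw [integral_sub (by simpa [mul_assoc] using h1) (by simpa [mul_assoc] using h2),
    sub_eq_zero] at hzero
  have e1 : ∫ x : ℝ, ((2 * p : ℝ) + 1) * x ^ (2 * p) * Real.exp (-b * x ^ 2)
      = ((2 * p : ℝ) + 1) * ∫ x : ℝ, x ^ (2 * p) * Real.exp (-b * x ^ 2) := by
    rw [← integral_const_mul]; congr 1; ext x; ring
  have e2 : ∫ x : ℝ, 2 * b * x ^ (2 * p + 2) * Real.exp (-b * x ^ 2)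
      = 2 * b * ∫ x : ℝ, x ^ (2 * p + 2) * Real.exp (-b * x ^ 2) := by
    rw [← integral_const_mul]; congr 1; ext x; ring
  rw [e1, e2] at hzero
  have h2p2 : 2 * (p + 1) = 2 * p + 2 := by ring
  rw [h2p2, div_mul_eq_mul_div, eq_comm, div_eq_iff (by positivity : (2:ℝ)*b ≠ 0)]
  linarith [hzero]

lemma gauss_pdf_moment {v : ℝ} (hv : 0 < v) (p : ℕ) :
    ∫ x : ℝ, x ^ (2 * p) * gaussianPDFReal 0 (⟨v, hv.le⟩ : ℝ≥0) x
      = v ^ p * ∏ k ∈ Finset.range p, (2 * (k : ℝ) + 1) := by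
  have hb : (0:ℝ) < (2 * v)⁻¹ := by positivity
  have hpdf : ∀ x : ℝ, gaussianPDFReal 0 (⟨v, hv.le⟩ : ℝ≥0) x
      = (Real.sqrt (2 * Real.pi * v))⁻¹ * Real.exp (-(2 * v)⁻¹ * x ^ 2) := by
    intro x
    unfold gaussianPDFReal
    erw [NNReal.coe_mk]
    simp only [NNReal.coe_mk, sub_zero]
    ring_nf
  induction p with
  | zero =>
      simp only [mul_zero, pow_zero, one_mul, Finset.range_zero, Finset.prod_empty, mul_one]
      exact integral_gaussianPDFReal_eq_one 0 (by simp [hv.ne'] : (⟨v, hv.le⟩ : ℝ≥0) ≠ 0)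
  | succ p ih =>
      have e : ∀ x : ℝ, x ^ (2 * (p+1)) * gaussianPDFReal 0 (⟨v, hv.le⟩ : ℝ≥0) x
          = (Real.sqrt (2 * Real.pi * v))⁻¹ * (x ^ (2 * (p+1)) * Real.exp (-(2 * v)⁻¹ * x ^ 2)) := by
        intro x; rw [hpdf x]; ring
      have ep : ∀ x : ℝ, x ^ (2 * p) * gaussianPDFReal 0 (⟨v, hv.le⟩ : ℝ≥0) x
          = (Real.sqrt (2 * Real.pi * v))⁻¹ * (x ^ (2 * p) * Real.exp (-(2 * v)⁻¹ * x ^ 2)) := by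
        intro x; rw [hpdf x]; ring
      have key := gauss_moment_rec hb p
      have hdiv : ((2 * (p:ℝ) + 1) / (2 * (2 * v)⁻¹)) = (2 * (p:ℝ) + 1) * v := by
        field_simp
      calc ∫ x : ℝ, x ^ (2 * (p+1)) * gaussianPDFReal 0 (⟨v, hv.le⟩ : ℝ≥0) x
          = (Real.sqrt (2 * Real.pi * v))⁻¹
              * ∫ x : ℝ, x ^ (2 * (p+1)) * Real.exp (-(2 * v)⁻¹ * x ^ 2) := by
            simp_rw [e]; rw [integral_const_mul]
        _ = ((2 * (p:ℝ) + 1) * v) * ((Real.sqrt (2 * Real.pi * v))⁻¹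
              * ∫ x : ℝ, x ^ (2 * p) * Real.exp (-(2 * v)⁻¹ * x ^ 2)) := by
            rw [key, hdiv]; ring
        _ = ((2 * (p:ℝ) + 1) * v)
              * ∫ x : ℝ, x ^ (2 * p) * gaussianPDFReal 0 (⟨v, hv.le⟩ : ℝ≥0) x := by
            simp_rw [ep]; rw [integral_const_mul]
        _ = v ^ (p+1) * ∏ k ∈ Finset.range (p+1), (2 * (k : ℝ) + 1) := by
            rw [ih, Finset.prod_range_succ]; push_cast; ring

lemma lintegral_gauss_moment {v : ℝ} (hv : 0 < v) (p : ℕ) :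
    ∫⁻ x : ℝ, ENNReal.ofReal (x ^ (2 * p)) ∂(gaussianReal 0 (⟨v, hv.le⟩ : ℝ≥0))
      = ENNReal.ofReal (v ^ p * ∏ k ∈ Finset.range p, (2 * (k : ℝ) + 1)) := by
  have hvne : (⟨v, hv.le⟩ : ℝ≥0) ≠ 0 := by simp [hv.ne']
  have hb : (0:ℝ) < (2 * v)⁻¹ := by positivity
  have hpdf : ∀ x : ℝ, gaussianPDFReal 0 (⟨v, hv.le⟩ : ℝ≥0) x
      = (Real.sqrt (2 * Real.pi * v))⁻¹ * Real.exp (-(2 * v)⁻¹ * x ^ 2) := by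
    intro x
    unfold gaussianPDFReal
    erw [NNReal.coe_mk]
    simp only [NNReal.coe_mk, sub_zero]
    ring_nf
  have hint : Integrable (fun x : ℝ => x ^ (2 * p) * gaussianPDFReal 0 (⟨v, hv.le⟩ : ℝ≥0) x) := by
    have : (fun x : ℝ => x ^ (2 * p) * gaussianPDFReal 0 (⟨v, hv.le⟩ : ℝ≥0) x)
        = fun x : ℝ => (Real.sqrt (2 * Real.pi * v))⁻¹
            * (x ^ (2 * p) * Real.exp (-(2 * v)⁻¹ * x ^ 2)) := by
      funext x; rw [hpdf x]; ring
    rw [this]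
    exact (integrable_poly_gauss (2 * p) hb).const_mul _
  rw [gaussianReal_of_var_ne_zero 0 hvne]
  erw [lintegral_withDensity_eq_lintegral_mul _ (measurable_gaussianPDF _ _)
      (by fun_prop : Measurable fun x : ℝ => ENNReal.ofReal (x ^ (2 * p)))]
  have heq : ∀ x : ℝ, (gaussianPDF 0 (⟨v, hv.le⟩ : ℝ≥0) * fun x => ENNReal.ofReal (x ^ (2 * p))) x
      = ENNReal.ofReal (x ^ (2 * p) * gaussianPDFReal 0 (⟨v, hv.le⟩ : ℝ≥0) x) := by
    intro x
    simp only [Pi.mul_apply, gaussianPDF]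
    erw [← ENNReal.ofReal_mul (gaussianPDFReal_nonneg _ _ _), mul_comm]
  simp_rw [heq]
  rw [← ofReal_integral_eq_lintegral_ofReal hint ?_, gauss_pdf_moment hv p]
  exact Filter.Eventually.of_forall fun x =>
    mul_nonneg ((even_two_mul p).pow_nonneg x) (gaussianPDFReal_nonneg _ _ _)

lemma pi_map_eval {ι : Type*} [Fintype ι] [DecidableEq ι] {α : ι → Type*}
    [∀ i, MeasurableSpace (α i)] (μ : ∀ i, Measure (α i)) [∀ i, IsProbabilityMeasure (μ i)]
    (i : ι) : (Measure.pi μ).map (Function.eval i) = μ i := by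
  ext s hs
  rw [Measure.map_apply (measurable_pi_apply i) hs, Set.eval_preimage, Measure.pi_pi]
  rw [Fintype.prod_eq_single i (fun j hj => by simp [Function.update_of_ne hj])]
  simp

lemma prod_odd_le_pow : ∀ p : ℕ, (∏ k ∈ Finset.range p, (2 * (k : ℝ) + 1)) ≤ (p : ℝ) ^ p := by
  intro p
  induction p with
  | zero => simp
  | succ p ih =>
      rw [Finset.prod_range_succ]
      have h1 : (0:ℝ) < p + 1 := by positivity
      rcases Nat.eq_zero_or_pos p with hp | hp
      · subst hp; norm_num
      have hp' : (1:ℝ) ≤ (p:ℝ) := by exact_mod_cast hp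
      have hbern : (2:ℝ) ≤ (1 + 1 / (p:ℝ)) ^ p := by
        have := one_add_mul_le_pow (a := 1 / (p:ℝ)) (le_trans (by norm_num : (-2:ℝ) ≤ 0) (by positivity)) p
        have hpp : (p:ℝ) * (1 / (p:ℝ)) = 1 := by field_simp
        nlinarith [this]
      have hkey : (2 * (p:ℝ) + 1) * (p:ℝ) ^ p ≤ ((p:ℝ) + 1) ^ (p + 1) := by
        have e : ((p:ℝ) + 1) ^ (p+1) = ((p:ℝ) + 1) * ((1 + 1/(p:ℝ)) ^ p * (p:ℝ) ^ p) := by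
          rw [← mul_pow]
          have : (1 + 1/(p:ℝ)) * (p:ℝ) = (p:ℝ) + 1 := by field_simp
          rw [this, pow_succ]; ring
        rw [e]
        have hppow : (0:ℝ) ≤ (p:ℝ) ^ p := by positivity
        nlinarith [mul_le_mul_of_nonneg_right hbern hppow]
      have hprod_nonneg : (0:ℝ) ≤ ∏ k ∈ Finset.range p, (2 * (k : ℝ) + 1) :=
        Finset.prod_nonneg fun k _ => by positivity
      calc (∏ k ∈ Finset.range p, (2 * (k : ℝ) + 1)) * (2 * (p:ℝ) + 1)
          ≤ (p:ℝ) ^ p * (2 * (p:ℝ) + 1) := by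
            apply mul_le_mul_of_nonneg_right ih (by positivity)
        _ ≤ ((p:ℝ) + 1) ^ (p + 1) := by rw [mul_comm]; exact hkey
        _ = ((p:ℕ) + 1 : ℕ) ^ (p+1) := by push_cast; ring

lemma final_numeric (σ δ : ℝ) (hσ : 0 < σ) (hδ0 : 0 < δ) (hδ1 : δ ≤ 1) (d T : ℕ)
    (hd : 0 < d) (hT : 2 < T) (P : ℕ) (hP2 : 2 ≤ P)
    (hPL : Real.log ((T:ℝ) / δ) ≤ (P:ℝ)) (hPlt : (P:ℝ) < Real.log ((T:ℝ) / δ) + 1) :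
    δ ^ (1 - 1/(P:ℝ)) * ((T:ℝ) * ((d:ℝ)^P * ((σ^2)^P * (P:ℝ)^P))) ^ (1/(P:ℝ))
      ≤ 5 * σ^2 * d * δ * Real.log (3 * T / δ) := by
  have hT3 : (3:ℝ) ≤ (T:ℝ) := by exact_mod_cast hT
  have hT0 : (0:ℝ) < T := by linarith
  have hd0 : (0:ℝ) < d := by exact_mod_cast hd
  have hP0 : (0:ℝ) < P := by exact_mod_cast (by omega : 0 < P)
  have hTδ3 : (3:ℝ) ≤ (T:ℝ) / δ := le_trans hT3 (by
    rw [le_div_iff₀ hδ0]; nlinarith)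
  have hTδ0 : (0:ℝ) < (T:ℝ) / δ := by linarith
  have hL1 : (1:ℝ) < Real.log ((T:ℝ) / δ) := by
    have h3 : (1:ℝ) < Real.log 3 := by
      rw [Real.lt_log_iff_exp_lt (by norm_num)]
      exact lt_trans Real.exp_one_lt_d9 (by norm_num)
    exact lt_of_lt_of_le h3 (Real.log_le_log (by norm_num) hTδ3)
  set L : ℝ := Real.log ((T:ℝ) / δ) with hL
  -- simplify the big rpow
  have hbase : (0:ℝ) ≤ (d:ℝ) * σ^2 * (P:ℝ) := by positivity
  have hA : ((T:ℝ) * ((d:ℝ)^P * ((σ^2)^P * (P:ℝ)^P))) ^ (1/(P:ℝ))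
      = (T:ℝ) ^ (1/(P:ℝ)) * ((d:ℝ) * σ^2 * (P:ℝ)) := by
    have h1 : (d:ℝ)^P * ((σ^2)^P * (P:ℝ)^P) = ((d:ℝ) * σ^2 * (P:ℝ))^P := by
      rw [mul_pow, mul_pow]; ring
    rw [h1, Real.mul_rpow (le_of_lt hT0) (by positivity), ← Real.rpow_natCast
      ((d:ℝ) * σ^2 * (P:ℝ)) P, ← Real.rpow_mul hbase]
    rw [mul_one_div, div_self hP0.ne', Real.rpow_one]
  rw [hA]
  have hδpow : δ ^ (1 - 1/(P:ℝ)) * (T:ℝ) ^ (1/(P:ℝ)) = δ * ((T:ℝ)/δ) ^ (1/(P:ℝ)) := by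
    rw [Real.div_rpow (le_of_lt hT0) (le_of_lt hδ0)]
    rw [show (1 - 1/(P:ℝ)) = 1 + (-(1/(P:ℝ))) by ring, Real.rpow_add hδ0, Real.rpow_one,
      Real.rpow_neg (le_of_lt hδ0)]
    field_simp
  have hexp : ((T:ℝ)/δ) ^ (1/(P:ℝ)) ≤ Real.exp 1 := by
    rw [Real.rpow_def_of_pos hTδ0]
    apply Real.exp_le_exp.mpr
    rw [mul_one_div, div_le_one hP0]
    exact hPL
  have hlog3 : Real.log (3 * (T:ℝ) / δ) = Real.log 3 + L := by
    rw [mul_div_assoc, Real.log_mul (by norm_num) (ne_of_gt hTδ0)]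
  calc δ ^ (1 - 1/(P:ℝ)) * ((T:ℝ) ^ (1/(P:ℝ)) * ((d:ℝ) * σ^2 * (P:ℝ)))
      = (δ ^ (1 - 1/(P:ℝ)) * (T:ℝ) ^ (1/(P:ℝ))) * ((d:ℝ) * σ^2 * (P:ℝ)) := by ring
    _ = δ * ((T:ℝ)/δ) ^ (1/(P:ℝ)) * ((d:ℝ) * σ^2 * (P:ℝ)) := by rw [hδpow]
    _ ≤ δ * Real.exp 1 * ((d:ℝ) * σ^2 * (P:ℝ)) := by
        apply mul_le_mul_of_nonneg_right _ hbase
        exact mul_le_mul_of_nonneg_left hexp (le_of_lt hδ0)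
    _ ≤ 5 * σ^2 * d * δ * Real.log (3 * T / δ) := by
        rw [hlog3]
        have hlog3' : (1:ℝ) ≤ Real.log 3 := by
          rw [Real.le_log_iff_exp_le (by norm_num)]
          exact le_trans (le_of_lt Real.exp_one_lt_d9) (by norm_num)
        have he : Real.exp 1 ≤ 2.7182818286 := le_of_lt Real.exp_one_lt_d9
        have he0 : (0:ℝ) < Real.exp 1 := Real.exp_pos 1
        have hkey : Real.exp 1 * (P:ℝ) ≤ 5 * (Real.log 3 + L) := by
          nlinarith [hPlt, hL1, hlog3', he, he0]
        nlinarith [hkey, mul_pos hd0 (by positivity : (0:ℝ) < σ^2), hδ0,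
          mul_nonneg (le_of_lt hδ0) (mul_nonneg (le_of_lt hd0) (sq_nonneg σ))]

lemma lintegral_gP_le (σ : ℝ) (hσ : 0 < σ) (d T : ℕ) (hd : 0 < d) (hT : 0 < T)
    (P : ℕ) (hP1 : 1 ≤ P) :
    ∫⁻ w : Fin T → Fin d → ℝ,
        (ENNReal.ofReal (⨆ t : Fin T, ∑ i, w t i ^ 2)) ^ ((P:ℕ):ℝ)
      ∂(Measure.pi fun _ : Fin T =>
          (Measure.pi fun _ : Fin d => gaussianReal 0 ⟨σ ^ 2, sq_nonneg σ⟩))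
      ≤ ENNReal.ofReal ((T:ℝ) * ((d:ℝ) ^ P
          * ((σ ^ 2) ^ P * ∏ k ∈ Finset.range P, (2 * (k : ℝ) + 1)))) := by
  classical
  have hv : (0:ℝ) < σ ^ 2 := by positivity
  set ν : Measure ℝ := gaussianReal 0 ⟨σ ^ 2, sq_nonneg σ⟩ with hνdef
  set μd : Measure (Fin d → ℝ) := Measure.pi (fun _ : Fin d => ν) with hμddef
  set μ : Measure (Fin T → Fin d → ℝ) := Measure.pi (fun _ : Fin T => μd) with hμdef
  haveI hprobν : IsProbabilityMeasure ν := by rw [hνdef]; exact instIsProbabilityMeasureGaussianReal _ _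
  haveI hprobμd : IsProbabilityMeasure μd := by rw [hμddef]; infer_instance
  haveI : Nonempty (Fin T) := ⟨⟨0, hT⟩⟩
  have hF_nonneg : ∀ w : Fin T → Fin d → ℝ, 0 ≤ ⨆ t : Fin T, ∑ i, w t i ^ 2 := fun w =>
    Real.iSup_nonneg fun t => Finset.sum_nonneg fun i _ => sq_nonneg _
  set Mo : ℝ := (σ ^ 2) ^ P * ∏ k ∈ Finset.range P, (2 * (k : ℝ) + 1) with hModef
  have hMo_nonneg : 0 ≤ Mo := by
    apply mul_nonneg (by positivity)
    exact Finset.prod_nonneg fun k _ => by positivity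
  -- the one-coordinate (ℝ-valued) moment
  have hν_moment : ∫⁻ x : ℝ, ENNReal.ofReal (x ^ (2 * P)) ∂ν = ENNReal.ofReal Mo :=
    lintegral_gauss_moment hv P
  -- the d-dimensional moment bound
  have hμd_bound : ∫⁻ y : Fin d → ℝ, ENNReal.ofReal ((∑ i, y i ^ 2) ^ P) ∂μd
      ≤ ENNReal.ofReal ((d:ℝ) ^ P * Mo) := by
    have hd0 : (0:ℝ) < (d:ℝ) := by exact_mod_cast hd
    obtain ⟨n, rfl⟩ : ∃ n, P = n + 1 := ⟨P - 1, by omega⟩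
    have hpt : ∀ y : Fin d → ℝ, (∑ i, y i ^ 2) ^ (n + 1)
        ≤ (d:ℝ) ^ n * ∑ i, y i ^ (2 * (n + 1)) := by
      intro y
      have hpow := pow_sum_div_card_le_sum_pow (s := (Finset.univ : Finset (Fin d)))
        (f := fun i => y i ^ 2) (fun i _ => sq_nonneg _) n
      rw [Finset.card_univ, Fintype.card_fin, div_le_iff₀ (by positivity)] at hpow
      calc (∑ i, y i ^ 2) ^ (n + 1) ≤ (∑ i, (y i ^ 2) ^ (n + 1)) * (d:ℝ) ^ n := hpow
        _ = (d:ℝ) ^ n * ∑ i, y i ^ (2 * (n + 1)) := by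
            rw [mul_comm]; congr 1
            exact Finset.sum_congr rfl fun i _ => by rw [← pow_mul]
    calc ∫⁻ y : Fin d → ℝ, ENNReal.ofReal ((∑ i, y i ^ 2) ^ (n + 1)) ∂μd
        ≤ ∫⁻ y : Fin d → ℝ,
            ENNReal.ofReal ((d:ℝ) ^ n * ∑ i, y i ^ (2 * (n + 1))) ∂μd :=
          lintegral_mono fun y => ENNReal.ofReal_le_ofReal (hpt y)
      _ = ENNReal.ofReal ((d:ℝ) ^ n)
            * ∑ i : Fin d, ∫⁻ y : Fin d → ℝ,
                ENNReal.ofReal (y i ^ (2 * (n + 1))) ∂μd := by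
          simp_rw [ENNReal.ofReal_mul (by positivity : (0:ℝ) ≤ (d:ℝ) ^ n),
            ENNReal.ofReal_sum_of_nonneg
              (fun i _ => (even_two_mul (n+1)).pow_nonneg _)]
          rw [lintegral_const_mul _ (by fun_prop),
            lintegral_finset_sum _ (fun i _ => by fun_prop)]
      _ = ENNReal.ofReal ((d:ℝ) ^ n) * ∑ i : Fin d, ENNReal.ofReal Mo := by
          congr 1
          apply Finset.sum_congr rfl
          intro i _
          have hmap : ∫⁻ y : Fin d → ℝ, ENNReal.ofReal (y i ^ (2 * (n + 1))) ∂μd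
              = ∫⁻ x : ℝ, ENNReal.ofReal (x ^ (2 * (n + 1))) ∂ν := by
            have h1 := lintegral_map (μ := Measure.pi fun _ : Fin d => ν)
              (f := fun x : ℝ => ENNReal.ofReal (x ^ (2 * (n + 1))))
              (g := Function.eval i) (by fun_prop) (measurable_pi_apply i)
            rw [pi_map_eval (fun _ : Fin d => ν) i] at h1
            rw [hμddef]
            exact h1.symm
          rw [hmap, hν_moment]
      _ = ENNReal.ofReal ((d:ℝ) ^ (n + 1) * Mo) := by
          rw [Finset.sum_const, Finset.card_univ, Fintype.card_fin,
            ENNReal.ofReal_mul (by positivity : (0:ℝ) ≤ (d:ℝ) ^ (n+1))]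
          rw [nsmul_eq_mul, pow_succ, ENNReal.ofReal_mul (by positivity : (0:ℝ) ≤ (d:ℝ) ^ n),
            ENNReal.ofReal_natCast]
          ring
  -- move from the sup to a sum over t
  have hsup_le : ∀ w : Fin T → Fin d → ℝ,
      (⨆ t : Fin T, ∑ i, w t i ^ 2) ^ P ≤ ∑ t : Fin T, (∑ i, w t i ^ 2) ^ P := by
    intro w
    obtain ⟨t0, ht0⟩ := Finite.exists_max (fun t : Fin T => ∑ i, w t i ^ 2)
    have hsup : (⨆ t : Fin T, ∑ i, w t i ^ 2) ≤ ∑ i, w t0 i ^ 2 := ciSup_le ht0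
    calc (⨆ t : Fin T, ∑ i, w t i ^ 2) ^ P ≤ (∑ i, w t0 i ^ 2) ^ P :=
          pow_le_pow_left₀ (hF_nonneg w) hsup P
      _ ≤ ∑ t : Fin T, (∑ i, w t i ^ 2) ^ P :=
          Finset.single_le_sum (f := fun t : Fin T => (∑ i, w t i ^ 2) ^ P)
            (fun t _ => by positivity) (Finset.mem_univ t0)
  calc ∫⁻ w, (ENNReal.ofReal (⨆ t : Fin T, ∑ i, w t i ^ 2)) ^ ((P:ℕ):ℝ) ∂μ
      = ∫⁻ w, ENNReal.ofReal ((⨆ t : Fin T, ∑ i, w t i ^ 2) ^ P) ∂μ := by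
        apply lintegral_congr fun w => ?_
        rw [ENNReal.rpow_natCast, ← ENNReal.ofReal_pow (hF_nonneg w)]
    _ ≤ ∫⁻ w, ∑ t : Fin T, ENNReal.ofReal ((∑ i, w t i ^ 2) ^ P) ∂μ := by
        apply lintegral_mono fun w => ?_
        calc ENNReal.ofReal ((⨆ t : Fin T, ∑ i, w t i ^ 2) ^ P)
            ≤ ENNReal.ofReal (∑ t : Fin T, (∑ i, w t i ^ 2) ^ P) :=
              ENNReal.ofReal_le_ofReal (hsup_le w)
          _ = ∑ t : Fin T, ENNReal.ofReal ((∑ i, w t i ^ 2) ^ P) :=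
              ENNReal.ofReal_sum_of_nonneg fun t _ => by positivity
    _ = ∑ t : Fin T, ∫⁻ w, ENNReal.ofReal ((∑ i, w t i ^ 2) ^ P) ∂μ :=
        lintegral_finset_sum _ (fun t _ => by fun_prop)
    _ ≤ ∑ t : Fin T, ENNReal.ofReal ((d:ℝ) ^ P * Mo) := by
        apply Finset.sum_le_sum
        intro t _
        have hmap : ∫⁻ w, ENNReal.ofReal ((∑ i, w t i ^ 2) ^ P) ∂μ
            = ∫⁻ y : Fin d → ℝ, ENNReal.ofReal ((∑ i, y i ^ 2) ^ P) ∂μd := by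
          have h1 := lintegral_map (μ := Measure.pi fun _ : Fin T => μd)
            (f := fun y : Fin d → ℝ => ENNReal.ofReal ((∑ i, y i ^ 2) ^ P))
            (g := Function.eval t) (by fun_prop) (measurable_pi_apply t)
          rw [pi_map_eval (fun _ : Fin T => μd) t] at h1
          rw [hμdef]
          exact h1.symm
        rw [hmap]
        exact hμd_bound
    _ = ENNReal.ofReal ((T:ℝ) * ((d:ℝ) ^ P * Mo)) := by
        rw [Finset.sum_const, Finset.card_univ, Fintype.card_fin, nsmul_eq_mul,
          ENNReal.ofReal_mul (by positivity : (0:ℝ) ≤ (T:ℝ)), ENNReal.ofReal_natCast]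

/-- **Lemma (expected maximal squared Gaussian norm restricted to a rare event).**
Let `w_1, …, w_T` be i.i.d. random vectors in `ℝ^d`, each a centered Gaussian with
covariance `σ²I`, suppose `T > 2`, and let `E` be any event with `P(E) ≤ δ` for some
`δ ∈ (0,1]`.  Then `E[1_E · max_{1 ≤ t ≤ T} ‖w_t‖²] ≤ 5σ²dδ·log(3T/δ)`
(Euclidean norm; `1_E` is the indicator of `E`). -/
theorem expected_max_gaussian_sq_norm_on_event (σ : ℝ) (hσ : 0 < σ) (d T : ℕ)
    (hd : 0 < d) (hT : 2 < T) (δ : ℝ) (hδ0 : 0 < δ) (hδ1 : δ ≤ 1)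
    (E : Set (Fin T → Fin d → ℝ)) (hE : MeasurableSet E)
    (hEδ : (Measure.pi fun _ : Fin T =>
        (Measure.pi fun _ : Fin d => gaussianReal 0 ⟨σ ^ 2, sq_nonneg σ⟩)) E
      ≤ ENNReal.ofReal δ) :
    ∫ w : Fin T → Fin d → ℝ,
        E.indicator (fun w => ⨆ t : Fin T, ∑ i, w t i ^ 2) w
        ∂(Measure.pi fun _ : Fin T =>
            (Measure.pi fun _ : Fin d => gaussianReal 0 ⟨σ ^ 2, sq_nonneg σ⟩))
      ≤ 5 * σ ^ 2 * d * δ * Real.log (3 * T / δ) := by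
  classical
  have hv : (0:ℝ) < σ ^ 2 := by positivity
  set ν : Measure ℝ := gaussianReal 0 ⟨σ ^ 2, sq_nonneg σ⟩ with hνdef
  set μd : Measure (Fin d → ℝ) := Measure.pi (fun _ : Fin d => ν) with hμddef
  set μ : Measure (Fin T → Fin d → ℝ) := Measure.pi (fun _ : Fin T => μd) with hμdef
  haveI hprobν : IsProbabilityMeasure ν := by rw [hνdef]; exact instIsProbabilityMeasureGaussianReal _ _
  haveI hprobμd : IsProbabilityMeasure μd := by rw [hμddef]; infer_instance
  -- basic positivity facts
  have hT3 : (3:ℝ) ≤ (T:ℝ) := by exact_mod_cast hT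
  have hTδ1 : (1:ℝ) ≤ 3 * (T:ℝ) / δ := by
    rw [le_div_iff₀ hδ0]; nlinarith
  have hRHS0 : 0 ≤ 5 * σ ^ 2 * (d:ℝ) * δ * Real.log (3 * T / δ) := by
    have := Real.log_nonneg hTδ1
    positivity
  -- the exponent P
  set P : ℕ := ⌈Real.log ((T:ℝ) / δ)⌉₊ with hPdef
  have hTδ3 : (3:ℝ) ≤ (T:ℝ) / δ := le_trans hT3 (by rw [le_div_iff₀ hδ0]; nlinarith)
  have hL1 : (1:ℝ) < Real.log ((T:ℝ) / δ) := by
    have h3 : (1:ℝ) < Real.log 3 := by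
      rw [Real.lt_log_iff_exp_lt (by norm_num)]
      exact lt_trans Real.exp_one_lt_d9 (by norm_num)
    exact lt_of_lt_of_le h3 (Real.log_le_log (by norm_num) hTδ3)
  have hP2 : 2 ≤ P := by
    have : 1 < P := Nat.lt_ceil.mpr (by exact_mod_cast hL1)
    omega
  have hPL : Real.log ((T:ℝ) / δ) ≤ (P:ℝ) := Nat.le_ceil _
  have hPlt : (P:ℝ) < Real.log ((T:ℝ) / δ) + 1 :=
    Nat.ceil_lt_add_one (le_of_lt (lt_trans one_pos hL1))
  have hP0 : (0:ℝ) < P := by exact_mod_cast (by omega : 0 < P)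
  have hP1 : (1:ℝ) < (P:ℝ) := by exact_mod_cast (by omega : 1 < P)
  -- measurability and nonnegativity of the sup
  have hF_meas : Measurable fun w : Fin T → Fin d → ℝ => ⨆ t : Fin T, ∑ i, w t i ^ 2 := by
    apply Measurable.iSup
    intro t
    fun_prop
  have hF_nonneg : ∀ w : Fin T → Fin d → ℝ, 0 ≤ ⨆ t : Fin T, ∑ i, w t i ^ 2 := fun w =>
    Real.iSup_nonneg fun t => Finset.sum_nonneg fun i _ => sq_nonneg _
  -- pass to lintegral
  rw [integral_eq_lintegral_of_nonneg_ae
    (Filter.Eventually.of_forall (Set.indicator_nonneg (fun w _ => hF_nonneg w)))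
    ((hF_meas.indicator hE).aestronglyMeasurable)]
  apply ENNReal.toReal_le_of_le_ofReal hRHS0
  -- abbreviations
  set F : (Fin T → Fin d → ℝ) → ℝ := fun w => ⨆ t : Fin T, ∑ i, w t i ^ 2 with hFdef
  set g : (Fin T → Fin d → ℝ) → ℝ≥0∞ := fun w => ENNReal.ofReal (F w) with hgdef
  have hg_meas : Measurable g := by
    apply Measurable.ennreal_ofReal hF_meas
  have hind : ∀ w, ENNReal.ofReal (E.indicator F w)
      = (E.indicator (fun _ => (1:ℝ≥0∞)) * g) w := by
    intro w
    by_cases hw : w ∈ E <;> simp [hw, hgdef]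
  calc ∫⁻ w, ENNReal.ofReal (E.indicator F w) ∂μ
      = ∫⁻ w, (E.indicator (fun _ => (1:ℝ≥0∞)) * g) w ∂μ := lintegral_congr hind
    _ ≤ (∫⁻ w, E.indicator (fun _ => (1:ℝ≥0∞)) w ^ Real.conjExponent (P:ℝ) ∂μ)
          ^ (1 / Real.conjExponent (P:ℝ))
        * (∫⁻ w, g w ^ ((P:ℕ):ℝ) ∂μ) ^ (1 / ((P:ℕ):ℝ)) :=
        ENNReal.lintegral_mul_le_Lp_mul_Lq μ ((Real.HolderConjugate.conjExponent hP1).symm)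
          ((measurable_const.indicator hE).aemeasurable) hg_meas.aemeasurable
    _ ≤ ENNReal.ofReal (5 * σ ^ 2 * d * δ * Real.log (3 * T / δ)) := by
        set Q : ℝ := Real.conjExponent (P:ℝ) with hQdef
        have hq : Q.HolderConjugate (P:ℝ) := (Real.HolderConjugate.conjExponent hP1).symm
        have hQ0 : 0 < Q := hq.pos
        have hQinv : 1/Q = 1 - 1/(P:ℝ) := by
          have h := hq.inv_add_inv_eq_one
          rw [one_div, one_div]
          linarith
        have hIndint : ∫⁻ w, E.indicator (fun _ => (1:ℝ≥0∞)) w ^ Q ∂μ = μ E := by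
          rw [lintegral_congr (g := E.indicator (fun _ => (1:ℝ≥0∞))) (fun w => by
            by_cases hw : w ∈ E <;>
              simp [hw, ENNReal.zero_rpow_of_pos hQ0])]
          exact lintegral_indicator_one hE
        have hb1 : (∫⁻ w, E.indicator (fun _ => (1:ℝ≥0∞)) w ^ Q ∂μ) ^ (1/Q)
            ≤ ENNReal.ofReal (δ ^ (1/Q)) := by
          rw [hIndint, ← ENNReal.ofReal_rpow_of_pos hδ0]
          exact ENNReal.rpow_le_rpow hEδ (by positivity)
        have hprodpos : (0:ℝ) < ∏ k ∈ Finset.range P, (2*(k:ℝ)+1) :=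
          Finset.prod_pos fun k _ => by positivity
        have hApos : 0 < (T:ℝ) * ((d:ℝ)^P * ((σ^2)^P
            * ∏ k ∈ Finset.range P, (2*(k:ℝ)+1))) := by
          have hT0 : (0:ℝ) < T := by linarith
          have hd0 : (0:ℝ) < d := by exact_mod_cast hd
          positivity
        have hb2 : (∫⁻ w, g w ^ ((P:ℕ):ℝ) ∂μ) ^ (1/((P:ℕ):ℝ))
            ≤ ENNReal.ofReal (((T:ℝ) * ((d:ℝ)^P * ((σ^2)^P
              * ∏ k ∈ Finset.range P, (2*(k:ℝ)+1)))) ^ (1/(P:ℝ))) := by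
          rw [← ENNReal.ofReal_rpow_of_pos hApos]
          apply ENNReal.rpow_le_rpow _ (by positivity)
          exact lintegral_gP_le σ hσ d T hd (by omega) P (by omega)
        refine le_trans (mul_le_mul' hb1 hb2) ?_
        rw [← ENNReal.ofReal_mul (by positivity)]
        apply ENNReal.ofReal_le_ofReal
        rw [hQinv]
        have hmono : ((T:ℝ) * ((d:ℝ)^P * ((σ^2)^P
              * ∏ k ∈ Finset.range P, (2*(k:ℝ)+1)))) ^ (1/(P:ℝ))
            ≤ ((T:ℝ) * ((d:ℝ)^P * ((σ^2)^P * (P:ℝ)^P))) ^ (1/(P:ℝ)) := by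
          apply Real.rpow_le_rpow (le_of_lt hApos) _ (by positivity)
          apply mul_le_mul_of_nonneg_left _ (by positivity : (0:ℝ) ≤ (T:ℝ))
          apply mul_le_mul_of_nonneg_left _ (by positivity : (0:ℝ) ≤ (d:ℝ)^P)
          apply mul_le_mul_of_nonneg_left (prod_odd_le_pow P)
            (by positivity : (0:ℝ) ≤ (σ^2)^P)
        calc δ ^ (1 - 1/(P:ℝ)) * ((T:ℝ) * ((d:ℝ)^P * ((σ^2)^P
              * ∏ k ∈ Finset.range P, (2*(k:ℝ)+1)))) ^ (1/(P:ℝ))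
            ≤ δ ^ (1 - 1/(P:ℝ)) * ((T:ℝ) * ((d:ℝ)^P * ((σ^2)^P * (P:ℝ)^P))) ^ (1/(P:ℝ)) := by
              apply mul_le_mul_of_nonneg_left hmono (by positivity)
          _ ≤ 5 * σ ^ 2 * d * δ * Real.log (3 * T / δ) :=
              final_numeric σ δ hσ hδ0 hδ1 d T hd hT P hP2 hPL hPlt
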